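/- In a DAG, two nodes i and j are d-separated given some conditioning set K if and only if they are *-separated given some conditioning set K', if and only if i and j are non-adjacent. -/

import Mathlib

variable {V : Type*}

/-- Undirected adjacency in a digraph given by edge relation `E`. -/
def Adjd (E : V → V → Prop) (i j : V) : Prop := E i j ∨ E j i

/-- Parents of a node. -/
def pa (E : V → V → Prop) (j : V) : Set V := {u | E u j}

/-- A directed path from `i` to `j`, as a nonrepeating list of consecutive vertices. -/
def IsDirPath (E : V → V → Prop) (p : List V) (i j : V) : Prop :=
  p.Chain' E ∧ p.head? = some i ∧ p.getLast? = some j ∧ p.Nodup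

/-- An undirected path from `i` to `j`. -/
def IsUndirPath (E : V → V → Prop) (p : List V) (i j : V) : Prop :=
  p.Chain' (Adjd E) ∧ p.head? = some i ∧ p.getLast? = some j ∧ p.Nodup

/-- Interior (non-endpoint) vertices of a path. -/
def interiorL (p : List V) : List V := (p.drop 1).dropLast

/-- `k` is a collider on the path `p`: both path-edges at `k` point into `k`. -/
def IsColliderOn (E : V → V → Prop) (p : List V) (k : V) : Prop :=
  ∃ (l₁ l₂ : List V) (a b : V), p = l₁ ++ a :: k :: b :: l₂ ∧ E a k ∧ E b k

/-- A digraph is acyclic if it has no directed cycles. -/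
def Acyclic (E : V → V → Prop) : Prop := ∀ i, ¬ Relation.TransGen E i i

/-- `k ∈ An(K)`: `k` lies in `K` or is an ancestor of a member of `K`. -/
def InAn (E : V → V → Prop) (K : Set V) (k : V) : Prop :=
  k ∈ K ∨ ∃ m ∈ K, Relation.TransGen E k m

/-- The path `p` is d-connecting between `i` and `j` given `K`. -/
def DConnecting (E : V → V → Prop) (K : Set V) (p : List V) (i j : V) : Prop :=
  IsUndirPath E p i j ∧
  (∀ k, IsColliderOn E p k → InAn E K k) ∧
  (∀ k, k ∈ interiorL p → ¬ IsColliderOn E p k → k ∉ K)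

/-- d-separation of `i` and `j` given `K`. -/
def DSep (E : V → V → Prop) (K : Set V) (i j : V) : Prop :=
  ¬ ∃ p, DConnecting E K p i j

/-- The path `p` is *-connecting: d-connecting with at most one collider. -/
def StarConnecting (E : V → V → Prop) (K : Set V) (p : List V) (i j : V) : Prop :=
  DConnecting E K p i j ∧
  ∀ k₁ k₂, IsColliderOn E p k₁ → IsColliderOn E p k₂ → k₁ = k₂

/-- *-separation of `i` and `j` given `K`. -/
def StarSep (E : V → V → Prop) (K : Set V) (i j : V) : Prop :=
  ¬ ∃ p, StarConnecting E K p i j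

/-- The weight of a directed path: product of its edge weights. -/
def pathWeight (C : V → V → ℝ) (p : List V) : ℝ :=
  ((p.zip p.tail).map fun q => C q.1 q.2).prod

/-- A critical (maximum-weight) directed path from `i` to `j`. -/
def IsCritical (E : V → V → Prop) (C : V → V → ℝ) (p : List V) (i j : V) : Prop :=
  IsDirPath E p i j ∧ 2 ≤ p.length ∧
  ∀ q, IsDirPath E q i j → 2 ≤ q.length → pathWeight C q ≤ pathWeight C p

/-- Genericity of the weights: critical paths are unique when they exist. -/
def Generic (E : V → V → Prop) (C : V → V → ℝ) : Prop :=
  ∀ i j p q, IsCritical E C p i j → IsCritical E C q i j → p = q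

/-- Positivity of the edge weights. -/
def PosWeights (E : V → V → Prop) (C : V → V → ℝ) : Prop :=
  ∀ a b, E a b → 0 < C a b

/-- Edge of the weighted transitive reduction `G^tr_C`: the edge `i → j` is present in `G`
and every other directed `i`-`j` path has strictly smaller weight. -/
def TrEdge (E : V → V → Prop) (C : V → V → ℝ) (i j : V) : Prop :=
  E i j ∧ ∀ q, IsDirPath E q i j → 2 ≤ q.length → q ≠ [i, j] → pathWeight C q < C i j

/-- A path factors through `K` (relative to endpoints `i`,`j`). -/
def FactorsThrough (p : List V) (K : Set V) (i j : V) : Prop :=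
  ∃ k ∈ interiorL p, k ∈ K ∧ k ≠ i ∧ k ≠ j

/-- Edge of the critical DAG `G*_K(C)`. -/
def CritEdge (E : V → V → Prop) (C : V → V → ℝ) (K : Set V) (i j : V) : Prop :=
  (∃ p, IsDirPath E p i j ∧ 2 ≤ p.length) ∧
  ∀ p, IsCritical E C p i j → ¬ FactorsThrough p K i j

/-- `i` and `j` are C*-connected given `K`: one of the five types of connecting
paths exists in the critical DAG `G*_K(C)`. -/
def CStarConnected (E : V → V → Prop) (C : V → V → ℝ) (K : Set V) (i j : V) : Prop :=
  (CritEdge E C K i j ∨ CritEdge E C K j i) ∨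
  (∃ p, p ∉ K ∧ CritEdge E C K p i ∧ CritEdge E C K p j) ∨
  (∃ l ∈ K, CritEdge E C K i l ∧ CritEdge E C K j l) ∨
  (∃ p, ∃ l ∈ K, p ∉ K ∧ CritEdge E C K p i ∧ CritEdge E C K p l ∧ CritEdge E C K j l) ∨
  (∃ p, ∃ l ∈ K, p ∉ K ∧ CritEdge E C K p j ∧ CritEdge E C K p l ∧ CritEdge E C K i l) ∨
  (∃ p q, ∃ l ∈ K, p ∉ K ∧ q ∉ K ∧ CritEdge E C K p i ∧ CritEdge E C K p l ∧
    CritEdge E C K q l ∧ CritEdge E C K q j)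

/-- C*-separation of `i` and `j` given `K`. -/
def CStarSep (E : V → V → Prop) (C : V → V → ℝ) (K : Set V) (i j : V) : Prop :=
  ¬ CStarConnected E C K i j

/-- `b` immediately follows `a` in the cyclic order given by the list `p`. -/
def CycConsec (p : List V) (a b : V) : Prop :=
  ∃ t : Fin p.length, p.get t = a ∧
    p.get ⟨(t.val + 1) % p.length, Nat.mod_lt _ t.pos⟩ = b

/-- The list `p` enumerates, in cyclic order, an induced subgraph of the digraph `E`
which is (as an undirected graph) a simple cycle. -/
def IsInducedCycleList (E : V → V → Prop) (p : List V) : Prop :=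
  p.Nodup ∧ 3 ≤ p.length ∧
  ∀ a ∈ p, ∀ b ∈ p, (Adjd E a b ↔ (CycConsec p a b ∨ CycConsec p b a))

/-- `k` is a collider of the induced cycle `p`: both incident cycle edges point into `k`. -/
def CycCollider (E : V → V → Prop) (p : List V) (k : V) : Prop :=
  ∃ a b, a ≠ b ∧ CycConsec p a k ∧ CycConsec p k b ∧ E a k ∧ E b k

section AuxSep

variable {E : V → V → Prop}

lemma collider_prepend {p : List V} {c : V} (l : List V)
    (h : IsColliderOn E p c) : IsColliderOn E (l ++ p) c := by
  obtain ⟨l₁, l₂, a, b, hp, h1, h2⟩ := h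
  exact ⟨l ++ l₁, l₂, a, b, by simp [hp], h1, h2⟩

lemma collider_reverse {p : List V} {c : V}
    (h : IsColliderOn E p.reverse c) : IsColliderOn E p c := by
  obtain ⟨l₁, l₂, a, b, hp, h1, h2⟩ := h
  refine ⟨l₂.reverse, l₁.reverse, b, a, ?_, h2, h1⟩
  have := congrArg List.reverse hp
  simpa using this

lemma no_collider_pair {x y c : V} : ¬ IsColliderOn E [x, y] c := by
  rintro ⟨l₁, l₂, a, b, h, -, -⟩
  have := congrArg List.length h
  simp at this
  omega

lemma nodup_mid_eq : ∀ (l₁ l₂ r₁ r₂ : List V) (y : V),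
    l₁ ++ y :: r₁ = l₂ ++ y :: r₂ → (l₁ ++ y :: r₁).Nodup → l₁ = l₂ ∧ r₁ = r₂ := by
  intro l₁
  induction l₁ with
  | nil =>
    intro l₂ r₁ r₂ y h hn
    cases l₂ with
    | nil =>
      simp only [List.nil_append, List.cons.injEq] at h
      exact ⟨rfl, h.2⟩
    | cons b l₂' =>
      simp only [List.nil_append, List.cons_append, List.cons.injEq] at h
      obtain ⟨rfl, h2⟩ := h
      exfalso
      have : y ∈ r₁ := by rw [h2]; simp
      simp only [List.nil_append, List.nodup_cons] at hn
      exact hn.1 this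
  | cons a l₁' ih =>
    intro l₂ r₁ r₂ y h hn
    cases l₂ with
    | nil =>
      simp only [List.nil_append, List.cons_append, List.cons.injEq] at h
      obtain ⟨ha, h2⟩ := h
      exfalso
      have hy : y ∈ l₁' ++ y :: r₁ := by simp
      simp only [List.cons_append, List.nodup_cons] at hn
      exact hn.1 (ha ▸ hy)
    | cons b l₂' =>
      simp only [List.cons_append, List.cons.injEq] at h
      obtain ⟨rfl, h2⟩ := h
      simp only [List.cons_append, List.nodup_cons] at hn
      obtain ⟨h1, h2'⟩ := ih l₂' r₁ r₂ y h2 hn.2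
      exact ⟨by rw [h1], h2'⟩

/-- Forward chase: from a forward edge `x → y` at the start of a chain,
either `x` reaches the last vertex, or `x` reaches a collider of the chain. -/
lemma chase : ∀ (r : List V) (x y : V), (x :: y :: r).Chain' (Adjd E) → E x y →
    Relation.TransGen E x ((x :: y :: r).getLast (by simp)) ∨
      ∃ c, IsColliderOn E (x :: y :: r) c ∧ Relation.TransGen E x c := by
  intro r
  induction r with
  | nil =>
    intro x y _ hxy
    left
    simpa [List.getLast] using Relation.TransGen.single hxy
  | cons z r' ih =>
    intro x y hch hxy
    have hch' : (y :: z :: r').Chain' (Adjd E) := (List.isChain_cons_cons.mp hch).2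
    have hadj : Adjd E y z := (List.isChain_cons_cons.mp hch').1
    rcases hadj with hyz | hzy
    · rcases ih y z hch' hyz with h | ⟨c, hc, ht⟩
      · left
        have hlast : (x :: y :: z :: r').getLast (by simp) =
            (y :: z :: r').getLast (by simp) := List.getLast_cons (by simp)
        rw [hlast]
        exact Relation.TransGen.head hxy h
      · right
        exact ⟨c, collider_prepend [x] hc, Relation.TransGen.head hxy ht⟩
    · right
      exact ⟨y, ⟨[], r', x, z, rfl, hxy, hzy⟩, Relation.TransGen.single hxy⟩

lemma chain'_reverse_adjd {p : List V} (h : p.Chain' (Adjd E)) :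
    p.reverse.Chain' (Adjd E) := by
  refine List.isChain_reverse.mpr ?_
  exact h.imp (fun a b hab => hab.symm)

/-- An interior non-collider on a d-connecting path is a proper ancestor of an endpoint
or of a collider. -/
lemma noncollider_anc {p : List V} {i j : V}
    (hch : p.Chain' (Adjd E)) (hhead : p.head? = some i) (hlast : p.getLast? = some j)
    {l₁ l₂ : List V} {x v y : V} (hp : p = l₁ ++ x :: v :: y :: l₂)
    (hnc : ¬ IsColliderOn E p v)
    (hcoll : ∀ c, IsColliderOn E p c →
      Relation.TransGen E c i ∨ Relation.TransGen E c j) :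
    Relation.TransGen E v i ∨ Relation.TransGen E v j := by
  have hinf : [x, v, y] <:+: p := ⟨l₁, l₂, by rw [hp]; simp⟩
  have hch3 : ([x, v, y] : List V).Chain' (Adjd E) := hch.infix hinf
  have hxv : Adjd E x v := (List.isChain_cons_cons.mp hch3).1
  have hvy : Adjd E v y := (List.isChain_cons_cons.mp (List.isChain_cons_cons.mp hch3).2).1
  have hncc : ¬ (E x v ∧ E y v) := fun ⟨h1, h2⟩ => hnc ⟨l₁, l₂, x, y, hp, h1, h2⟩
  by_cases hfw : E v y
  · -- forward chase along the suffix v :: y :: l₂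
    have hsuf : (v :: y :: l₂) <:+ p := ⟨l₁ ++ [x], by rw [hp]; simp⟩
    have hchs : (v :: y :: l₂).Chain' (Adjd E) := hch.suffix hsuf
    have hlast' : (v :: y :: l₂).getLast (by simp) = j := by
      obtain ⟨pre, hpre⟩ := hsuf
      have : p.getLast? = (v :: y :: l₂).getLast? := by
        rw [← hpre]
        exact List.getLast?_append_of_ne_nil pre (l₂ := v :: y :: l₂)
          (List.cons_ne_nil _ _)
      rw [hlast] at this
      have := this.symm
      rwa [List.getLast?_eq_getLast (l := v :: y :: l₂) (by simp), Option.some.injEq] at this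
    rcases chase l₂ v y hchs hfw with h | ⟨c, hc, ht⟩
    · right; rwa [hlast'] at h
    · have hcp : IsColliderOn E p c := by
        rw [hp]
        have : l₁ ++ x :: v :: y :: l₂ = (l₁ ++ [x]) ++ v :: y :: l₂ := by simp
        rw [this]
        exact collider_prepend _ hc
      rcases hcoll c hcp with h | h
      · exact Or.inl (ht.trans h)
      · exact Or.inr (ht.trans h)
  · -- backward chase
    have hyv : E y v := hvy.resolve_left hfw
    have hvx : E v x := by
      rcases hxv with h | h
      · exact absurd ⟨h, hyv⟩ hncc
      · exact h
    have hrev : p.reverse = ((y :: l₂).reverse) ++ v :: x :: l₁.reverse := by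
      rw [hp]; simp
    have hchr : p.reverse.Chain' (Adjd E) := chain'_reverse_adjd hch
    have hsuf : (v :: x :: l₁.reverse) <:+ p.reverse := ⟨(y :: l₂).reverse, hrev.symm⟩
    have hchs : (v :: x :: l₁.reverse).Chain' (Adjd E) := hchr.suffix hsuf
    have hlast' : (v :: x :: l₁.reverse).getLast (by simp) = i := by
      have h1 : p.reverse.getLast? = (v :: x :: l₁.reverse).getLast? := by
        rw [hrev]
        exact List.getLast?_append_of_ne_nil (y :: l₂).reverse
          (l₂ := v :: x :: l₁.reverse) (List.cons_ne_nil _ _)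
      rw [List.getLast?_reverse, hhead] at h1
      have := h1.symm
      rwa [List.getLast?_eq_getLast (l := v :: x :: l₁.reverse) (by simp), Option.some.injEq] at this
    rcases chase l₁.reverse v x hchs hvx with h | ⟨c, hc, ht⟩
    · left; rwa [hlast'] at h
    · have hcp : IsColliderOn E p c := by
        apply collider_reverse
        rw [hrev]
        exact collider_prepend _ hc
      rcases hcoll c hcp with h | h
      · exact Or.inl (ht.trans h)
      · exact Or.inr (ht.trans h)

/-- Main lemma: nonadjacent vertices are d-separated by the set of proper ancestors. -/
lemma nonadj_dsep (hA : Acyclic E) {i j : V} (hij : i ≠ j) (hnadj : ¬ Adjd E i j) :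
    DSep E {v | v ≠ i ∧ v ≠ j ∧
      (Relation.TransGen E v i ∨ Relation.TransGen E v j)} i j := by
  set K : Set V := {v | v ≠ i ∧ v ≠ j ∧
      (Relation.TransGen E v i ∨ Relation.TransGen E v j)} with hK
  rintro ⟨p, ⟨⟨hch, hhead, hlast, hnd⟩, hC, hN⟩⟩
  have hcoll : ∀ c, IsColliderOn E p c →
      Relation.TransGen E c i ∨ Relation.TransGen E c j := by
    intro c hc
    rcases hC c hc with h | ⟨m, hm, ht⟩
    · exact h.2.2
    · rcases hm.2.2 with h | h
      · exact Or.inl (ht.trans h)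
      · exact Or.inr (ht.trans h)
  rcases p with _ | ⟨a, _ | ⟨b, _ | ⟨c, rest⟩⟩⟩
  · simp at hhead
  · simp at hhead hlast
    exact hij (hhead.symm.trans hlast)
  · simp at hhead hlast
    subst hhead; subst hlast
    exact hnadj (List.isChain_cons_cons.mp hch).1
  · have ha : i = a := by
      have h' : a = i := by simpa using hhead
      exact h'.symm
    subst ha
    -- b is an interior vertex
    have hbmem : b ∈ interiorL (i :: b :: c :: rest) := by
      simp [interiorL]
    have hbne_i : b ≠ i := by
      intro h; subst h
      simp [List.nodup_cons] at hnd
    have hbne_j : b ≠ j := by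
      intro h
      have h1 : (c :: rest).getLast? = some j := by
        rw [← hlast, List.getLast?_cons_cons, List.getLast?_cons_cons]
      have hj : j ∈ c :: rest := List.mem_of_mem_getLast? (by simp [h1])
      have hb : b ∉ c :: rest := (List.nodup_cons.mp ((List.nodup_cons.mp hnd).2)).1
      exact hb (h ▸ hj)
    have hb_coll : IsColliderOn E (i :: b :: c :: rest) b := by
      by_contra hnc
      have hanc := noncollider_anc hch hhead hlast
        (l₁ := []) (x := i) (v := b) (y := c) (l₂ := rest) rfl hnc hcoll
      exact hN b hbmem hnc ⟨hbne_i, hbne_j, hanc⟩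
    obtain ⟨m₁, m₂, a', b', hp, hE1, hE2⟩ := hb_coll
    have hmid : (m₁ ++ [a']) ++ b :: (b' :: m₂) = [i] ++ b :: (c :: rest) := by
      simpa using hp.symm
    have hmn : ((m₁ ++ [a']) ++ b :: (b' :: m₂)).Nodup := by
      rw [hmid]; simpa using hnd
    obtain ⟨hu1, hu2⟩ := nodup_mid_eq _ _ _ _ _ hmid hmn
    have ha' : a' = i := by
      have := congrArg List.getLast? hu1
      simpa [List.getLast?_concat] using this
    have hb' : b' = c := by
      simpa using congrArg List.head? hu2
    rw [ha'] at hE1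
    rw [hb'] at hE2
    -- now E i b and E c b
    cases rest with
    | nil =>
      have hcj : c = j := by
        simpa using hlast
      rcases hcoll b ⟨[], [], i, c, rfl, hE1, hE2⟩ with h | h
      · exact hA b (h.trans (Relation.TransGen.single hE1))
      · exact hA b (h.trans (Relation.TransGen.single (hcj ▸ hE2)))
    | cons w rest' =>
      -- c is an interior vertex
      have hcmem : c ∈ interiorL (i :: b :: c :: w :: rest') := by
        simp [interiorL]
      have hcne_i : c ≠ i := by
        intro h; subst h
        simp [List.nodup_cons] at hnd
      have hcne_j : c ≠ j := by
        intro h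
        have h1 : (w :: rest').getLast? = some j := by
          rw [← hlast, List.getLast?_cons_cons, List.getLast?_cons_cons,
            List.getLast?_cons_cons]
        have hj : j ∈ w :: rest' := List.mem_of_mem_getLast? (by simp [h1])
        have hc : c ∉ w :: rest' :=
          (List.nodup_cons.mp ((List.nodup_cons.mp ((List.nodup_cons.mp hnd).2)).2)).1
        exact hc (h ▸ hj)
      have hc_coll : IsColliderOn E (i :: b :: c :: w :: rest') c := by
        by_contra hnc
        have hanc := noncollider_anc hch hhead hlast
          (l₁ := [i]) (x := b) (v := c) (y := w) (l₂ := rest') rfl hnc hcoll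
        exact hN c hcmem hnc ⟨hcne_i, hcne_j, hanc⟩
      obtain ⟨n₁, n₂, a'', b'', hq, hF1, hF2⟩ := hc_coll
      have hmid2 : (n₁ ++ [a'']) ++ c :: (b'' :: n₂) = [i, b] ++ c :: (w :: rest') := by
        simpa using hq.symm
      have hmn2 : ((n₁ ++ [a'']) ++ c :: (b'' :: n₂)).Nodup := by
        rw [hmid2]; simpa using hnd
      obtain ⟨hv1, hv2⟩ := nodup_mid_eq _ _ _ _ _ hmid2 hmn2
      have ha'' : a'' = b := by
        have := congrArg List.getLast? hv1
        simpa [List.getLast?_concat] using this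
      rw [ha''] at hF1
      -- E b c (from hF1) and E c b (from hE2): 2-cycle
      exact hA b ((Relation.TransGen.single hF1).trans (Relation.TransGen.single hE2))

end AuxSep

/-- In a DAG, two nodes `i` and `j` are d-separated given some conditioning
set `K` iff they are *-separated given some conditioning set `K'`, iff they are
non-adjacent. -/
theorem dsep_iff_starsep_iff_nonadjacent
    (E : V → V → Prop) (hA : Acyclic E) (i j : V) (hij : i ≠ j) :
    ((∃ K : Set V, i ∉ K ∧ j ∉ K ∧ DSep E K i j) ↔
      (∃ K' : Set V, i ∉ K' ∧ j ∉ K' ∧ StarSep E K' i j)) ∧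
    ((∃ K' : Set V, i ∉ K' ∧ j ∉ K' ∧ StarSep E K' i j) ↔ ¬ Adjd E i j) := by
  -- In the adjacent case, the edge path [i, j] is *-connecting for every admissible K.
  have hpair : ∀ K : Set V, i ∉ K → j ∉ K → Adjd E i j → ¬ StarSep E K i j := by
    intro K hiK hjK hadj hstar
    apply hstar
    refine ⟨[i, j], ⟨⟨?_, rfl, by simp, by simp [hij]⟩, ?_, ?_⟩, ?_⟩
    · exact List.isChain_cons_cons.mpr ⟨hadj, List.isChain_singleton j⟩
    · intro k hk; exact absurd hk no_collider_pair
    · intro k hk; simp [interiorL] at hk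
    · intro k₁ k₂ h1 _; exact absurd h1 no_collider_pair
  -- In the nonadjacent case, the proper-ancestor set d-separates.
  have main : ¬ Adjd E i j → ∃ K : Set V, i ∉ K ∧ j ∉ K ∧ DSep E K i j := by
    intro h
    exact ⟨_, by simp, by simp, nonadj_dsep hA hij h⟩
  have dst : ∀ K : Set V, DSep E K i j → StarSep E K i j :=
    fun K h ⟨p, hp⟩ => h ⟨p, hp.1⟩
  constructor
  · constructor
    · rintro ⟨K, h1, h2, h3⟩
      exact ⟨K, h1, h2, dst K h3⟩
    · rintro ⟨K, h1, h2, h3⟩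
      by_cases hadj : Adjd E i j
      · exact absurd h3 (hpair K h1 h2 hadj)
      · obtain ⟨K', a, b, c⟩ := main hadj
        exact ⟨K', a, b, c⟩
  · constructor
    · rintro ⟨K, h1, h2, h3⟩ hadj
      exact hpair K h1 h2 hadj h3
    · intro h
      obtain ⟨K, a, b, c⟩ := main h
      exact ⟨K, a, b, dst K c⟩
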